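/- arXiv:1202.5258 — 7 statements merged into one kernel-verified Lean document; each statement's English description precedes it below -/
import Mathlib

section
/- For every natural number k ≥ 1, there exists a probability distribution μ on {-1,1}^k such that: (i) for every coordinate i, the expectation of x_i under μ is 0; (ii) for every pair of distinct coordinates i ≠ j, the expectation of x_i · x_j under μ is 0 (i.e., the coordinates are pairwise independent with uniform marginals); and (iii) the probability under μ of the all-ones vector (1,1,...,1) equals 1/(2·⌈(k+1)/2⌉). -/
/-- The ±1 sign associated to a boolean coordinate. -/
noncomputable def sgn (b : Bool) : ℝ := if b then 1 else -1

namespace Stmt0Aux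

open Finset

variable {k : ℕ}

def wt (x : Fin k → Bool) : ℕ := ∑ i, if x i then 0 else 1

lemma sgn_eq (b : Bool) : sgn b = 1 - 2 * (if b then (0:ℝ) else 1) := by
  cases b <;> norm_num [sgn]

lemma sgn_sq (b : Bool) : sgn b * sgn b = 1 := by
  cases b <;> norm_num [sgn]

lemma wt_cast (x : Fin k → Bool) : ((wt x : ℕ) : ℝ) = ∑ i, if x i then (0:ℝ) else 1 := by
  unfold wt; push_cast
  exact Finset.sum_congr rfl (fun i _ => by split <;> simp)

lemma sum_sgn (x : Fin k → Bool) : ∑ i, sgn (x i) = (k:ℝ) - 2 * (wt x : ℝ) := by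
  simp only [sgn_eq, Finset.sum_sub_distrib, Finset.sum_const, Finset.card_univ,
    Fintype.card_fin, ← Finset.mul_sum, ← wt_cast]
  simp

lemma wt_comp (x : Fin k → Bool) (σ : Equiv.Perm (Fin k)) : wt (x ∘ σ) = wt x :=
  Equiv.sum_comp σ (fun i => if x i then 0 else 1)

def Tw (k w : ℕ) : Finset (Fin k → Bool) := Finset.univ.filter (fun x => wt x = w)

lemma mem_Tw {w : ℕ} {x : Fin k → Bool} (hx : x ∈ Tw k w) : wt x = w := by
  simpa [Tw] using hx

lemma sum_Tw_comp (w : ℕ) (σ : Equiv.Perm (Fin k)) (f : (Fin k → Bool) → ℝ) :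
    ∑ x ∈ Tw k w, f (x ∘ σ) = ∑ x ∈ Tw k w, f x := by
  apply Finset.sum_nbij' (fun x => x ∘ ⇑σ) (fun x => x ∘ ⇑σ.symm)
  · intro a ha
    simp only [Tw, Finset.mem_filter, Finset.mem_univ, true_and] at ha ⊢
    rw [wt_comp]; exact ha
  · intro a ha
    simp only [Tw, Finset.mem_filter, Finset.mem_univ, true_and] at ha ⊢
    rw [show a ∘ ⇑σ.symm = a ∘ ⇑(σ.symm : Equiv.Perm (Fin k)) from rfl, wt_comp]; exact ha
  · intro a _; funext i; simp
  · intro a _; funext i; simp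
  · intro a _; rfl

lemma exists_perm {i j a b : Fin k} (hij : i ≠ j) (hab : a ≠ b) :
    ∃ σ : Equiv.Perm (Fin k), σ a = i ∧ σ b = j := by
  classical
  refine ⟨(Equiv.swap a i).trans (Equiv.swap ((Equiv.swap a i) b) j), ?_, ?_⟩
  · have h1 : (Equiv.swap a i) a = i := Equiv.swap_apply_left a i
    have h2 : (Equiv.swap a i) b ≠ i := by
      intro h
      have := (Equiv.swap a i).injective (h.trans (Equiv.swap_apply_left a i).symm)
      exact hab this.symm
    simp only [Equiv.trans_apply, h1]
    exact Equiv.swap_apply_of_ne_of_ne (Ne.symm h2) hij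
  · simp [Equiv.trans_apply, Equiv.swap_apply_left]

lemma S1_const (w : ℕ) (i j : Fin k) :
    ∑ x ∈ Tw k w, sgn (x i) = ∑ x ∈ Tw k w, sgn (x j) := by
  have h := sum_Tw_comp w (Equiv.swap i j) (fun x => sgn (x j))
  simp only [Function.comp_apply, Equiv.swap_apply_right] at h
  exact h

lemma S1_value (w : ℕ) (i : Fin k) :
    (k:ℝ) * ∑ x ∈ Tw k w, sgn (x i) = ((k:ℝ) - 2*w) * (Tw k w).card := by
  calc (k:ℝ) * ∑ x ∈ Tw k w, sgn (x i)
      = ∑ _j : Fin k, ∑ x ∈ Tw k w, sgn (x i) := by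
        simp [Finset.sum_const, nsmul_eq_mul]
    _ = ∑ j : Fin k, ∑ x ∈ Tw k w, sgn (x j) :=
        Finset.sum_congr rfl (fun j _ => S1_const w i j)
    _ = ∑ x ∈ Tw k w, ∑ j : Fin k, sgn (x j) := Finset.sum_comm
    _ = ∑ x ∈ Tw k w, ((k:ℝ) - 2*w) := by
        refine Finset.sum_congr rfl (fun x hx => ?_)
        rw [sum_sgn, mem_Tw hx]
    _ = ((k:ℝ) - 2*w) * (Tw k w).card := by
        rw [Finset.sum_const, nsmul_eq_mul, mul_comm]

lemma S2_const (w : ℕ) {i j a b : Fin k} (hij : i ≠ j) (hab : a ≠ b) :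
    ∑ x ∈ Tw k w, sgn (x a) * sgn (x b) = ∑ x ∈ Tw k w, sgn (x i) * sgn (x j) := by
  obtain ⟨σ, ha, hb⟩ := exists_perm hij hab
  have h := sum_Tw_comp w σ (fun x => sgn (x a) * sgn (x b))
  simp only [Function.comp_apply, ha, hb] at h
  exact h.symm

lemma S1_total (w : ℕ) :
    ∑ j : Fin k, ∑ x ∈ Tw k w, sgn (x j) = ((k:ℝ) - 2*w) * (Tw k w).card := by
  calc ∑ j : Fin k, ∑ x ∈ Tw k w, sgn (x j)
      = ∑ x ∈ Tw k w, ∑ j : Fin k, sgn (x j) := Finset.sum_comm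
    _ = ∑ x ∈ Tw k w, ((k:ℝ) - 2*w) := by
        refine Finset.sum_congr rfl (fun x hx => ?_)
        rw [sum_sgn, mem_Tw hx]
    _ = ((k:ℝ) - 2*w) * (Tw k w).card := by
        rw [Finset.sum_const, nsmul_eq_mul, mul_comm]

lemma S2_value (w : ℕ) {i j : Fin k} (hij : i ≠ j) :
    (k:ℝ) * ((k:ℝ) - 1) * ∑ x ∈ Tw k w, sgn (x i) * sgn (x j)
      = (((k:ℝ) - 2*w)^2 - k) * (Tw k w).card := by
  set c := ∑ x ∈ Tw k w, sgn (x i) * sgn (x j) with hc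
  have hrow : ∀ a : Fin k, ∑ b : Fin k, ∑ x ∈ Tw k w, sgn (x a) * sgn (x b)
      = ((Tw k w).card : ℝ) + ((k:ℝ) - 1) * c := by
    intro a
    have hdiag : ∑ x ∈ Tw k w, sgn (x a) * sgn (x a) = ((Tw k w).card : ℝ) := by
      simp [sgn_sq]
    have hoff : ∑ b ∈ Finset.univ.erase a, ∑ x ∈ Tw k w, sgn (x a) * sgn (x b)
        = ((k:ℝ) - 1) * c := by
      have : ∀ b ∈ Finset.univ.erase a, (∑ x ∈ Tw k w, sgn (x a) * sgn (x b)) = c := by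
        intro b hb
        exact S2_const w hij (Finset.ne_of_mem_erase hb).symm
      rw [Finset.sum_congr rfl this, Finset.sum_const, nsmul_eq_mul,
        Finset.card_erase_of_mem (Finset.mem_univ a)]
      have hk1 : 1 ≤ k := Fin.pos a
      rw [Finset.card_univ, Fintype.card_fin]
      push_cast [hk1]
      ring
    rw [← Finset.add_sum_erase _ _ (Finset.mem_univ a), hdiag, hoff]
  have hcol : ∀ a : Fin k, ∑ b : Fin k, ∑ x ∈ Tw k w, sgn (x a) * sgn (x b)
      = ((k:ℝ) - 2*w) * ∑ x ∈ Tw k w, sgn (x a) := by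
    intro a
    rw [Finset.sum_comm]
    calc ∑ x ∈ Tw k w, ∑ b : Fin k, sgn (x a) * sgn (x b)
        = ∑ x ∈ Tw k w, sgn (x a) * ((k:ℝ) - 2*w) := by
          refine Finset.sum_congr rfl (fun x hx => ?_)
          rw [← Finset.mul_sum, sum_sgn, mem_Tw hx]
      _ = ((k:ℝ) - 2*w) * ∑ x ∈ Tw k w, sgn (x a) := by
          rw [← Finset.sum_mul, mul_comm]
  have htot : (k:ℝ) * (((Tw k w).card : ℝ) + ((k:ℝ) - 1) * c)
      = ((k:ℝ) - 2*w) * (((k:ℝ) - 2*w) * (Tw k w).card) := by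
    calc (k:ℝ) * (((Tw k w).card : ℝ) + ((k:ℝ) - 1) * c)
        = ∑ _a : Fin k, (((Tw k w).card : ℝ) + ((k:ℝ) - 1) * c) := by
          simp only [Finset.sum_const, nsmul_eq_mul, Finset.card_univ, Fintype.card_fin]
      _ = ∑ a : Fin k, ∑ b : Fin k, ∑ x ∈ Tw k w, sgn (x a) * sgn (x b) :=
          Finset.sum_congr rfl (fun a _ => (hrow a).symm)
      _ = ∑ a : Fin k, ((k:ℝ) - 2*w) * ∑ x ∈ Tw k w, sgn (x a) :=
          Finset.sum_congr rfl (fun a _ => hcol a)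
      _ = ((k:ℝ) - 2*w) * ∑ a : Fin k, ∑ x ∈ Tw k w, sgn (x a) := by
          rw [Finset.mul_sum]
      _ = ((k:ℝ) - 2*w) * (((k:ℝ) - 2*w) * (Tw k w).card) := by
          rw [S1_total]
  linear_combination htot

lemma count_aux (k w : ℕ) : (∑ i ∈ Finset.range k, if i < w then 1 else 0) = min w k := by
  induction k with
  | zero => simp
  | succ n ih =>
    rw [Finset.sum_range_succ, ih]
    by_cases h : n < w <;> simp [h] <;> omega

lemma Tw_card_pos {w : ℕ} (hw : w ≤ k) : 0 < (Tw k w).card := by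
  rw [Finset.card_pos]
  refine ⟨fun i => !decide ((i:ℕ) < w), ?_⟩
  simp only [Tw, Finset.mem_filter, Finset.mem_univ, true_and]
  unfold wt
  have : ∀ i : Fin k, (if (!decide ((i:ℕ) < w)) = true then 0 else 1)
      = if (i:ℕ) < w then 1 else 0 := by
    intro i
    by_cases h : (i:ℕ) < w <;> simp [h]
  rw [Finset.sum_congr rfl (fun i _ => this i), Fin.sum_univ_eq_sum_range
    (fun i => if i < w then 1 else 0), count_aux]
  omega

lemma wt_ones : wt (fun _ : Fin k => true) = 0 := by
  unfold wt; simp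

lemma master (k w1 w2 : ℕ) (hw11 : 1 ≤ w1) (hw12 : w1 ≤ k) (hw21 : 1 ≤ w2) (hw22 : w2 ≤ k)
    (p α β : ℝ) (hp : 0 ≤ p) (hα : 0 ≤ α) (hβ : 0 ≤ β)
    (hsum : p + α + β = 1)
    (h1 : p * k + α * ((k:ℝ) - 2*w1) + β * ((k:ℝ) - 2*w2) = 0)
    (h2 : p * ((k:ℝ) * ((k:ℝ)-1)) + α * (((k:ℝ)-2*w1)^2 - k) + β * (((k:ℝ)-2*w2)^2 - k) = 0) :
    ∃ μ : (Fin k → Bool) → ℝ,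
      (∀ x, 0 ≤ μ x) ∧
      (∑ x : Fin k → Bool, μ x) = 1 ∧
      (∀ i : Fin k, (∑ x : Fin k → Bool, μ x * sgn (x i)) = 0) ∧
      (∀ i j : Fin k, i ≠ j →
        (∑ x : Fin k → Bool, μ x * (sgn (x i) * sgn (x j))) = 0) ∧
      μ (fun _ => true) = p := by
  classical
  set N1 : ℝ := ((Tw k w1).card : ℝ) with hN1
  set N2 : ℝ := ((Tw k w2).card : ℝ) with hN2
  have hN1pos : 0 < N1 := by rw [hN1]; exact_mod_cast Tw_card_pos hw12
  have hN2pos : 0 < N2 := by rw [hN2]; exact_mod_cast Tw_card_pos hw22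
  have hN1ne : N1 ≠ 0 := ne_of_gt hN1pos
  have hN2ne : N2 ≠ 0 := ne_of_gt hN2pos
  have hkpos : 0 < k := le_trans hw11 hw12
  have hkne : (k:ℝ) ≠ 0 := by positivity
  set μ : (Fin k → Bool) → ℝ := fun x =>
    p * (if x = (fun _ => true) then 1 else 0)
      + (α / N1) * (if wt x = w1 then 1 else 0)
      + (β / N2) * (if wt x = w2 then 1 else 0) with hμ
  have expand : ∀ g : (Fin k → Bool) → ℝ,
      ∑ x : Fin k → Bool, μ x * g x
        = p * g (fun _ => true) + (α / N1) * ∑ x ∈ Tw k w1, g x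
          + (β / N2) * ∑ x ∈ Tw k w2, g x := by
    intro g
    have e1 : ∑ x : Fin k → Bool, (if x = (fun _ => true) then (1:ℝ) else 0) * g x
        = g (fun _ => true) := by
      simp [ite_mul]
    have e2 : ∀ w, ∑ x : Fin k → Bool, (if wt x = w then (1:ℝ) else 0) * g x
        = ∑ x ∈ Tw k w, g x := by
      intro w
      simp only [ite_mul, one_mul, zero_mul, Tw, Finset.sum_filter]
    calc ∑ x : Fin k → Bool, μ x * g x
        = ∑ x : Fin k → Bool,
            (p * ((if x = (fun _ => true) then (1:ℝ) else 0) * g x)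
              + (α / N1) * ((if wt x = w1 then (1:ℝ) else 0) * g x)
              + (β / N2) * ((if wt x = w2 then (1:ℝ) else 0) * g x)) := by
          refine Finset.sum_congr rfl (fun x _ => ?_)
          rw [hμ]; ring
      _ = p * g (fun _ => true) + (α / N1) * ∑ x ∈ Tw k w1, g x
            + (β / N2) * ∑ x ∈ Tw k w2, g x := by
          rw [Finset.sum_add_distrib, Finset.sum_add_distrib,
            ← Finset.mul_sum, ← Finset.mul_sum, ← Finset.mul_sum, e1, e2, e2]
  refine ⟨μ, ?_, ?_, ?_, ?_, ?_⟩
  · intro x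
    rw [hμ]
    have h01 : ∀ P : Prop, ∀ inst : Decidable P, (0:ℝ) ≤ if P then 1 else 0 := by
      intro P inst; split <;> norm_num
    apply add_nonneg
    apply add_nonneg
    · exact mul_nonneg hp (h01 _ _)
    · exact mul_nonneg (div_nonneg hα hN1pos.le) (h01 _ _)
    · exact mul_nonneg (div_nonneg hβ hN2pos.le) (h01 _ _)
  · have := expand (fun _ => 1)
    simp only [mul_one] at this
    rw [this, Finset.sum_const, Finset.sum_const, nsmul_eq_mul, nsmul_eq_mul, mul_one, mul_one,
      ← hN1, ← hN2, div_mul_cancel₀ _ hN1ne, div_mul_cancel₀ _ hN2ne]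
    exact hsum
  · intro i
    rw [expand (fun x => sgn (x i))]
    have s1 : ∑ x ∈ Tw k w1, sgn (x i) = ((k:ℝ) - 2*w1) * N1 / k := by
      rw [eq_div_iff hkne, mul_comm _ (k:ℝ), S1_value, hN1]
    have s2 : ∑ x ∈ Tw k w2, sgn (x i) = ((k:ℝ) - 2*w2) * N2 / k := by
      rw [eq_div_iff hkne, mul_comm _ (k:ℝ), S1_value, hN2]
    rw [s1, s2]
    have hs : sgn ((fun _ : Fin k => true) i) = 1 := by simp [sgn]
    rw [hs, mul_one]
    have c1 : (α / N1) * (((k:ℝ) - 2*w1) * N1 / k) = α * ((k:ℝ) - 2*w1) / k := by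
      field_simp
    have c2 : (β / N2) * (((k:ℝ) - 2*w2) * N2 / k) = β * ((k:ℝ) - 2*w2) / k := by
      field_simp
    rw [c1, c2]
    have : p + α * ((k:ℝ) - 2*w1) / k + β * ((k:ℝ) - 2*w2) / k
        = (p * k + α * ((k:ℝ) - 2*w1) + β * ((k:ℝ) - 2*w2)) / k := by
      field_simp
    rw [this, h1, zero_div]
  · intro i j hij
    have hk2 : (2:ℕ) ≤ k := by
      have : Nontrivial (Fin k) := ⟨⟨i, j, hij⟩⟩
      have h := Fintype.one_lt_card (α := Fin k); simp at h; omega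
    have hk1ne : (k:ℝ) - 1 ≠ 0 := by
      have : (2:ℝ) ≤ (k:ℝ) := by exact_mod_cast hk2
      intro h; nlinarith
    rw [expand (fun x => sgn (x i) * sgn (x j))]
    have s1 : ∑ x ∈ Tw k w1, sgn (x i) * sgn (x j)
        = (((k:ℝ) - 2*w1)^2 - k) * N1 / ((k:ℝ) * ((k:ℝ)-1)) := by
      rw [eq_div_iff (mul_ne_zero hkne hk1ne), mul_comm _ ((k:ℝ) * ((k:ℝ)-1)), S2_value _ hij, hN1]
    have s2 : ∑ x ∈ Tw k w2, sgn (x i) * sgn (x j)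
        = (((k:ℝ) - 2*w2)^2 - k) * N2 / ((k:ℝ) * ((k:ℝ)-1)) := by
      rw [eq_div_iff (mul_ne_zero hkne hk1ne), mul_comm _ ((k:ℝ) * ((k:ℝ)-1)), S2_value _ hij, hN2]
    rw [s1, s2]
    have hs : sgn ((fun _ : Fin k => true) i) * sgn ((fun _ : Fin k => true) j) = 1 := by
      simp [sgn]
    rw [hs, mul_one]
    set D : ℝ := (k:ℝ) * ((k:ℝ) - 1) with hD
    have hDne : D ≠ 0 := mul_ne_zero hkne hk1ne
    have c1 : (α / N1) * ((((k:ℝ) - 2*w1)^2 - k) * N1 / D)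
        = α * (((k:ℝ) - 2*w1)^2 - k) / D := by
      field_simp
    have c2 : (β / N2) * ((((k:ℝ) - 2*w2)^2 - k) * N2 / D)
        = β * (((k:ℝ) - 2*w2)^2 - k) / D := by
      field_simp
    rw [c1, c2]
    have : p + α * (((k:ℝ) - 2*w1)^2 - k) / D + β * (((k:ℝ) - 2*w2)^2 - k) / D
        = (p * D + α * (((k:ℝ) - 2*w1)^2 - k) + β * (((k:ℝ) - 2*w2)^2 - k)) / D := by
      field_simp
    rw [this, hD, h2, zero_div]
  · rw [hμ]
    have h1' : ¬ (wt (fun _ : Fin k => true) = w1) := by rw [wt_ones]; omega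
    have h2' : ¬ (wt (fun _ : Fin k => true) = w2) := by rw [wt_ones]; omega
    simp [h1', h2']

end Stmt0Aux


/-- For every `k ≥ 1` there is a probability distribution `μ` on `{-1,1}^k`
(encoded as `Fin k → Bool` with `true ↦ 1`, `false ↦ -1`) whose coordinates have mean zero,
are pairwise uncorrelated, and such that the all-ones vector has probability
`1 / (2 * ⌈(k+1)/2⌉)`. -/
theorem stmt0 (k : ℕ) (hk : 1 ≤ k) :
    ∃ μ : (Fin k → Bool) → ℝ,
      (∀ x, 0 ≤ μ x) ∧
      (∑ x : Fin k → Bool, μ x) = 1 ∧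
      (∀ i : Fin k, (∑ x : Fin k → Bool, μ x * sgn (x i)) = 0) ∧
      (∀ i j : Fin k, i ≠ j →
        (∑ x : Fin k → Bool, μ x * (sgn (x i) * sgn (x j))) = 0) ∧
      μ (fun _ => true) = 1 / (2 * (⌈((k : ℝ) + 1) / 2⌉ : ℤ)) := by
  rcases Nat.even_or_odd k with ⟨n, hn⟩ | ⟨n, hn⟩
  · -- even case : k = 2n, n ≥ 1
    have hn1 : 1 ≤ n := by omega
    have hceil : (⌈((k : ℝ) + 1) / 2⌉ : ℤ) = (n + 1 : ℤ) := by
      rw [Int.ceil_eq_iff]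
      constructor
      · push_cast [hn]; linarith
      · push_cast [hn]; linarith
    obtain ⟨μ, hpos, htot, h1m, h2m, hval⟩ :=
      Stmt0Aux.master k (n + 1) n (by omega) (by omega) (by omega) (by omega)
        (1 / (2 * (n + 1 : ℝ))) ((n : ℝ) / (2 * (n + 1 : ℝ))) (1/2)
        (by positivity) (by positivity) (by norm_num)
        (by field_simp; ring)
        (by push_cast [hn]; field_simp; ring)
        (by push_cast [hn]; field_simp; ring)
    refine ⟨μ, hpos, htot, h1m, h2m, ?_⟩
    rw [hval, hceil]
    push_cast
    ring
  · -- odd case : k = 2n + 1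
    have hceil : (⌈((k : ℝ) + 1) / 2⌉ : ℤ) = (n + 1 : ℤ) := by
      have : ((k : ℝ) + 1) / 2 = ((n + 1 : ℤ) : ℝ) := by
        push_cast [hn]; ring
      rw [this, Int.ceil_intCast]
    obtain ⟨μ, hpos, htot, h1m, h2m, hval⟩ :=
      Stmt0Aux.master k (n + 1) (n + 1) (by omega) (by omega) (by omega) (by omega)
        (1 / (2 * (n + 1 : ℝ))) ((2 * n + 1 : ℝ) / (2 * (n + 1 : ℝ))) 0
        (by positivity) (by positivity) (by norm_num)
        (by field_simp; ring)
        (by push_cast [hn]; field_simp; ring)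
        (by push_cast [hn]; field_simp; ring)
    refine ⟨μ, hpos, htot, h1m, h2m, ?_⟩
    rw [hval, hceil]
    push_cast
    ring
end

section
/- Let k ≥ 1 be odd. Define μ on {-1,1}^k by: μ(x) = 1/(k+1) if x = (1,...,1); μ(x) = (k/(k+1))·(1/C(k,(k+1)/2)) if Σ_{i=1}^k x_i = -1; and μ(x) = 0 otherwise, where C(n,m) denotes the binomial coefficient. Then μ is a probability distribution (its total mass is 1), every coordinate has expectation 0 under μ, and for every pair of distinct coordinates i ≠ j the expectation of x_i · x_j under μ is 0. -/
open Finset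

/-- The distribution from Fact 2.9 (odd case): mass `1/(k+1)` on the all-ones vector,
mass `(k/(k+1)) / C(k,(k+1)/2)` on each vector whose coordinates sum to `-1`, and `0`
elsewhere. -/
noncomputable def muOdd (k : ℕ) (x : Fin k → Bool) : ℝ :=
  if x = (fun _ => true) then 1 / (k + 1)
  else if (∑ i : Fin k, sgn (x i)) = -1 then
    ((k : ℝ) / (k + 1)) * (1 / (k.choose ((k + 1) / 2)))
  else 0

private lemma swap_sum (k t : ℕ) (σ : Equiv.Perm (Fin k)) (f : Finset (Fin k) → ℝ) :
    ∑ S ∈ powersetCard t (univ : Finset (Fin k)), f (S.map σ.toEmbedding)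
      = ∑ S ∈ powersetCard t (univ : Finset (Fin k)), f S := by
  conv_rhs => rw [← Finset.map_univ_equiv σ, Finset.powersetCard_map, Finset.sum_map]
  refine Finset.sum_congr rfl fun S _ => ?_
  congr 1

private lemma A_val (k t : ℕ) (i : Fin k) :
    (k:ℝ) * ∑ S ∈ powersetCard t (univ : Finset (Fin k)), (if i ∈ S then (1:ℝ) else 0)
      = t * (k.choose t) := by
  have hconst : ∀ i' : Fin k,
      ∑ S ∈ powersetCard t (univ : Finset (Fin k)), (if i' ∈ S then (1:ℝ) else 0)
        = ∑ S ∈ powersetCard t (univ : Finset (Fin k)), (if i ∈ S then (1:ℝ) else 0) := by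
    intro i'
    rw [← swap_sum k t (Equiv.swap i i') (fun S => if i' ∈ S then (1:ℝ) else 0)]
    refine Finset.sum_congr rfl fun S _ => ?_
    have h : i' ∈ S.map (Equiv.swap i i').toEmbedding ↔ i ∈ S := by
      rw [Finset.mem_map_equiv, Equiv.symm_swap, Equiv.swap_apply_right]
    simp only [h]
  have hsum : ∑ i' : Fin k, ∑ S ∈ powersetCard t (univ : Finset (Fin k)),
      (if i' ∈ S then (1:ℝ) else 0) = t * (k.choose t) := by
    rw [Finset.sum_comm]
    have : ∀ S ∈ powersetCard t (univ : Finset (Fin k)),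
        ∑ i' : Fin k, (if i' ∈ S then (1:ℝ) else 0) = (t : ℝ) := by
      intro S hS
      rw [Finset.mem_powersetCard_univ] at hS
      rw [Finset.sum_boole]
      simp [Finset.filter_univ_mem, hS]
    rw [Finset.sum_congr rfl this, Finset.sum_const, Finset.card_powersetCard,
      Finset.card_univ, Fintype.card_fin]
    ring
  calc (k:ℝ) * ∑ S ∈ powersetCard t (univ : Finset (Fin k)), (if i ∈ S then (1:ℝ) else 0)
      = ∑ i' : Fin k, ∑ S ∈ powersetCard t (univ : Finset (Fin k)),
          (if i' ∈ S then (1:ℝ) else 0) := by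
        rw [Finset.sum_congr rfl (fun i' _ => hconst i'), Finset.sum_const, Finset.card_univ,
          Fintype.card_fin, nsmul_eq_mul]
    _ = t * (k.choose t) := hsum

private lemma B_val (k t : ℕ) (i j : Fin k) (hij : i ≠ j) :
    ((k:ℝ) - 1) * ∑ S ∈ powersetCard t (univ : Finset (Fin k)),
        (if i ∈ S ∧ j ∈ S then (1:ℝ) else 0)
      = ((t:ℝ) - 1) * ∑ S ∈ powersetCard t (univ : Finset (Fin k)),
        (if i ∈ S then (1:ℝ) else 0) := by
  have hconst : ∀ j' : Fin k, j' ≠ i →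
      ∑ S ∈ powersetCard t (univ : Finset (Fin k)), (if i ∈ S ∧ j' ∈ S then (1:ℝ) else 0)
        = ∑ S ∈ powersetCard t (univ : Finset (Fin k)), (if i ∈ S ∧ j ∈ S then (1:ℝ) else 0) := by
    intro j' hj'
    rw [← swap_sum k t (Equiv.swap j j') (fun S => if i ∈ S ∧ j' ∈ S then (1:ℝ) else 0)]
    refine Finset.sum_congr rfl fun S _ => ?_
    have h1 : i ∈ S.map (Equiv.swap j j').toEmbedding ↔ i ∈ S := by
      rw [Finset.mem_map_equiv, Equiv.symm_swap,
        Equiv.swap_apply_of_ne_of_ne hij (Ne.symm hj')]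
    have h2 : j' ∈ S.map (Equiv.swap j j').toEmbedding ↔ j ∈ S := by
      rw [Finset.mem_map_equiv, Equiv.symm_swap, Equiv.swap_apply_right]
    simp only [h1, h2]
  have hsum : ∑ j' ∈ (univ : Finset (Fin k)).erase i,
      ∑ S ∈ powersetCard t (univ : Finset (Fin k)), (if i ∈ S ∧ j' ∈ S then (1:ℝ) else 0)
        = ((t:ℝ) - 1) * ∑ S ∈ powersetCard t (univ : Finset (Fin k)),
            (if i ∈ S then (1:ℝ) else 0) := by
    rw [Finset.sum_comm]
    rw [Finset.mul_sum]
    refine Finset.sum_congr rfl fun S hS => ?_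
    rw [Finset.mem_powersetCard_univ] at hS
    by_cases hiS : i ∈ S
    · have : ∀ j' ∈ (univ : Finset (Fin k)).erase i,
          (if i ∈ S ∧ j' ∈ S then (1:ℝ) else 0) = (if j' ∈ S.erase i then 1 else 0) := by
        intro j' hj'
        rw [Finset.mem_erase] at hj'
        simp [hiS, Finset.mem_erase, hj'.1]
      rw [Finset.sum_congr rfl this, Finset.sum_boole]
      have hfe : ((univ : Finset (Fin k)).erase i).filter (· ∈ S.erase i) = S.erase i := by
        ext a
        simp only [Finset.mem_filter, Finset.mem_erase, Finset.mem_univ, true_and]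
        tauto
      rw [hfe, Finset.card_erase_of_mem hiS, hS, if_pos hiS, mul_one]
      have ht : 1 ≤ t := by
        rw [← hS]
        exact Finset.card_pos.mpr ⟨i, hiS⟩
      push_cast [ht]
      ring
    · simp [hiS]
  have hcard : ((univ : Finset (Fin k)).erase i).card = k - 1 := by
    rw [Finset.card_erase_of_mem (Finset.mem_univ i), Finset.card_univ, Fintype.card_fin]
  have hk1 : 1 ≤ k := by
    rcases Nat.eq_zero_or_pos k with h | h
    · exact absurd i.2 (by omega)
    · exact h
  calc ((k:ℝ) - 1) * ∑ S ∈ powersetCard t (univ : Finset (Fin k)),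
        (if i ∈ S ∧ j ∈ S then (1:ℝ) else 0)
      = ∑ j' ∈ (univ : Finset (Fin k)).erase i,
          ∑ S ∈ powersetCard t (univ : Finset (Fin k)),
            (if i ∈ S ∧ j' ∈ S then (1:ℝ) else 0) := by
        rw [Finset.sum_congr rfl (fun j' hj' => hconst j' (Finset.mem_erase.mp hj').1),
          Finset.sum_const, hcard, nsmul_eq_mul]
        push_cast [hk1]
        ring
    _ = _ := hsum

private lemma mean_sum (k t : ℕ) (hk : k = 2*t+1) (i : Fin k) :
    ∑ S ∈ powersetCard t (univ : Finset (Fin k)), (if i ∈ S then (1:ℝ) else -1)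
      = -(k.choose t) / k := by
  have hA := A_val k t i
  have hC : ∑ S ∈ powersetCard t (univ : Finset (Fin k)), (1:ℝ) = (k.choose t : ℝ) := by
    rw [Finset.sum_const, Finset.card_powersetCard, Finset.card_univ, Fintype.card_fin,
      nsmul_eq_mul, mul_one]
  have hexp : ∀ S : Finset (Fin k), (if i ∈ S then (1:ℝ) else -1)
      = 2 * (if i ∈ S then (1:ℝ) else 0) - 1 := by
    intro S; split_ifs <;> norm_num
  rw [Finset.sum_congr rfl fun S _ => hexp S, Finset.sum_sub_distrib, ← Finset.mul_sum, hC]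
  have hk0 : (k:ℝ) ≠ 0 := by
    rw [hk]; push_cast; positivity
  have hkr : (k:ℝ) = 2*t+1 := by rw [hk]; push_cast; ring
  set A := ∑ S ∈ powersetCard t (univ : Finset (Fin k)), (if i ∈ S then (1:ℝ) else 0) with hAdef
  rw [eq_div_iff hk0]
  linear_combination 2*hA - ((k.choose t : ℝ)) * hkr

private lemma pair_sum (k t : ℕ) (hk : k = 2*t+1) (i j : Fin k) (hij : i ≠ j) :
    ∑ S ∈ powersetCard t (univ : Finset (Fin k)),
        ((if i ∈ S then (1:ℝ) else -1) * (if j ∈ S then (1:ℝ) else -1))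
      = -(k.choose t) / k := by
  have hA := A_val k t i
  have hA' := A_val k t j
  have hB := B_val k t i j hij
  have hC : ∑ S ∈ powersetCard t (univ : Finset (Fin k)), (1:ℝ) = (k.choose t : ℝ) := by
    rw [Finset.sum_const, Finset.card_powersetCard, Finset.card_univ, Fintype.card_fin,
      nsmul_eq_mul, mul_one]
  have hexp : ∀ S : Finset (Fin k),
      (if i ∈ S then (1:ℝ) else -1) * (if j ∈ S then (1:ℝ) else -1)
        = 4 * (if i ∈ S ∧ j ∈ S then (1:ℝ) else 0)
          - 2 * (if i ∈ S then (1:ℝ) else 0) - 2 * (if j ∈ S then (1:ℝ) else 0) + 1 := by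
    intro S
    by_cases h1 : i ∈ S <;> by_cases h2 : j ∈ S <;> simp [h1, h2] <;> norm_num
  have ht1 : 1 ≤ t := by
    have : 1 < Fintype.card (Fin k) := Fintype.one_lt_card_iff_nontrivial.mpr ⟨⟨i, j, hij⟩⟩
    rw [Fintype.card_fin] at this
    omega
  have hkr : (k:ℝ) = 2*t+1 := by rw [hk]; push_cast; ring
  have htr : (1:ℝ) ≤ (t:ℝ) := by exact_mod_cast ht1
  have hk0 : (k:ℝ) ≠ 0 := by rw [hkr]; positivity
  have hk1 : (k:ℝ) - 1 ≠ 0 := by rw [hkr]; nlinarith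
  rw [Finset.sum_congr rfl fun S _ => hexp S]
  rw [Finset.sum_add_distrib, Finset.sum_sub_distrib, Finset.sum_sub_distrib,
    ← Finset.mul_sum, ← Finset.mul_sum, ← Finset.mul_sum, hC]
  -- Let A = ∑ ite i, A' = ∑ ite j, B = ∑ ite both
  set A := ∑ S ∈ powersetCard t (univ : Finset (Fin k)), (if i ∈ S then (1:ℝ) else 0) with hAdef
  set A' := ∑ S ∈ powersetCard t (univ : Finset (Fin k)), (if j ∈ S then (1:ℝ) else 0) with hA'def
  set B := ∑ S ∈ powersetCard t (univ : Finset (Fin k)),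
    (if i ∈ S ∧ j ∈ S then (1:ℝ) else 0) with hBdef
  have hAv : A = t * (k.choose t) / k := by
    rw [eq_div_iff hk0]; linear_combination hA
  have hA'v : A' = t * (k.choose t) / k := by
    rw [eq_div_iff hk0]; linear_combination hA'
  have hBv : B = ((t:ℝ)-1) * t * (k.choose t) / ((k:ℝ) * ((k:ℝ)-1)) := by
    rw [eq_div_iff (mul_ne_zero hk0 hk1)]
    linear_combination (k:ℝ) * hB + ((t:ℝ)-1) * hA
  rw [hBv, hAv, hA'v, hkr]
  have htr0 : (t:ℝ) ≠ 0 := by linarith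
  have h2t : (2*(t:ℝ)+1) - 1 ≠ 0 := by nlinarith
  field_simp
  ring

private lemma master (k t : ℕ) (hk : k = 2*t+1) (F : (Fin k → Bool) → ℝ) :
    ∑ x : Fin k → Bool, muOdd k x * F x
      = (1/((k:ℝ)+1)) * F (fun _ => true)
        + ((k:ℝ)/((k:ℝ)+1)) * (1/(k.choose (t+1))) *
          ∑ S ∈ powersetCard t (univ : Finset (Fin k)), F (fun i => decide (i ∈ S)) := by
  have hhalf : (k+1)/2 = t+1 := by omega
  set W : ℝ := ((k:ℝ)/((k:ℝ)+1)) * (1/(k.choose (t+1))) with hW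
  have hsgnsum : ∀ x : Fin k → Bool, ∑ i : Fin k, sgn (x i)
      = 2 * ((univ.filter (fun i => x i = true)).card : ℝ) - k := by
    intro x
    have : ∀ i : Fin k, sgn (x i) = 2 * (if x i = true then (1:ℝ) else 0) - 1 := by
      intro i; unfold sgn; cases x i <;> norm_num
    rw [Finset.sum_congr rfl fun i _ => this i, Finset.sum_sub_distrib, ← Finset.mul_sum,
      Finset.sum_boole, Finset.sum_const, Finset.card_univ, Fintype.card_fin,
      nsmul_eq_mul, mul_one]
  have hdecomp : ∀ x : Fin k → Bool, muOdd k x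
      = (if x = (fun _ => true) then 1/((k:ℝ)+1) else 0)
        + (if (univ.filter (fun i => x i = true)).card = t then W else 0) := by
    intro x
    unfold muOdd
    by_cases hx : x = (fun _ => true)
    · have hcard : (univ.filter (fun i => x i = true)).card = k := by
        rw [hx]
        simp
      rw [if_pos hx, if_pos hx, hcard, if_neg (by omega)]
      ring
    · rw [if_neg hx, if_neg hx, zero_add, hhalf]
      have : ((∑ i : Fin k, sgn (x i)) = -1)
          ↔ (univ.filter (fun i => x i = true)).card = t := by
        rw [hsgnsum x]
        constructor
        · intro h
          have : ((univ.filter (fun i => x i = true)).card : ℝ) = t := by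
            have hkr : (k:ℝ) = 2*t+1 := by rw [hk]; push_cast; ring
            nlinarith
          exact_mod_cast this
        · intro h
          rw [h, hk]
          push_cast
          ring
      by_cases hc : (univ.filter (fun i => x i = true)).card = t
      · rw [if_pos (this.mpr hc), if_pos hc]
      · rw [if_neg (fun h => hc (this.mp h)), if_neg hc]
  calc ∑ x : Fin k → Bool, muOdd k x * F x
      = ∑ x : Fin k → Bool, ((if x = (fun _ => true) then (1/((k:ℝ)+1)) * F x else 0)
          + (if (univ.filter (fun i => x i = true)).card = t then W * F x else 0)) := by
        refine Finset.sum_congr rfl fun x _ => ?_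
        rw [hdecomp x]
        split_ifs <;> ring
    _ = (1/((k:ℝ)+1)) * F (fun _ => true)
        + W * ∑ S ∈ powersetCard t (univ : Finset (Fin k)), F (fun i => decide (i ∈ S)) := by
        rw [Finset.sum_add_distrib]
        congr 1
        · rw [Finset.sum_ite_eq' Finset.univ (fun _ => true) (fun x => (1/((k:ℝ)+1)) * F x)]
          simp
        · rw [← Finset.sum_filter]
          rw [← Finset.mul_sum]
          congr 1
          refine Finset.sum_nbij' (fun x => univ.filter (fun i => x i = true))
            (fun S => fun i => decide (i ∈ S)) ?_ ?_ ?_ ?_ ?_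
          · intro x hx
            rw [Finset.mem_filter] at hx
            rw [Finset.mem_powersetCard_univ]
            exact hx.2
          · intro S hS
            rw [Finset.mem_powersetCard_univ] at hS
            rw [Finset.mem_filter]
            refine ⟨Finset.mem_univ _, ?_⟩
            rw [← hS]
            congr 1
            ext a
            simp
          · intro x _
            funext a
            simp only [Finset.mem_filter, Finset.mem_univ, true_and]
            cases h : x a <;> simp [h]
          · intro S _
            ext a
            simp
          · intro x _
            congr 1
            funext a
            simp only [Finset.mem_filter, Finset.mem_univ, true_and]
            cases h : x a <;> simp [h]

/-- For odd `k ≥ 1`, `muOdd k` is a probability distribution on `{-1,1}^k`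
with mean-zero coordinates and pairwise-uncorrelated coordinates. -/
theorem stmt1 (k : ℕ) (hk : 1 ≤ k) (hodd : Odd k) :
    (∀ x, 0 ≤ muOdd k x) ∧
    (∑ x : Fin k → Bool, muOdd k x) = 1 ∧
    (∀ i : Fin k, (∑ x : Fin k → Bool, muOdd k x * sgn (x i)) = 0) ∧
    (∀ i j : Fin k, i ≠ j →
      (∑ x : Fin k → Bool, muOdd k x * (sgn (x i) * sgn (x j))) = 0) := by
  obtain ⟨t, ht⟩ := hodd
  have hk2 : k = 2*t+1 := by omega
  have hkp1 : ((k:ℝ)+1) ≠ 0 := by positivity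
  have hk0 : (k:ℝ) ≠ 0 := Nat.cast_ne_zero.mpr (by omega)
  have hchoose_sym : k.choose (t+1) = k.choose t := by
    have h1 : t + 1 ≤ k := by omega
    have := Nat.choose_symm h1
    rw [show k - (t+1) = t by omega] at this
    exact this.symm
  have hCpos : (0:ℝ) < (k.choose t : ℝ) := by
    exact_mod_cast Nat.choose_pos (by omega : t ≤ k)
  have hC0 : ((k.choose t : ℕ) : ℝ) ≠ 0 := ne_of_gt hCpos
  refine ⟨?_, ?_, ?_, ?_⟩
  · intro x
    unfold muOdd
    split_ifs <;> positivity
  · have := master k t hk2 (fun _ => 1)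
    simp only [mul_one] at this
    rw [this, hchoose_sym]
    rw [Finset.sum_const, Finset.card_powersetCard, Finset.card_univ, Fintype.card_fin,
      nsmul_eq_mul, mul_one]
    field_simp
    ring
  · intro i
    have := master k t hk2 (fun x => sgn (x i))
    rw [this, hchoose_sym]
    have hpt : ∀ S : Finset (Fin k), sgn (decide (i ∈ S)) = (if i ∈ S then (1:ℝ) else -1) := by
      intro S
      unfold sgn
      by_cases h : i ∈ S <;> simp [h]
    rw [Finset.sum_congr rfl fun S _ => hpt S, mean_sum k t hk2 i]
    unfold sgn
    simp only [if_pos rfl]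
    field_simp
    ring_nf
    norm_num
  · intro i j hij
    have := master k t hk2 (fun x => sgn (x i) * sgn (x j))
    rw [this, hchoose_sym]
    have hpt : ∀ S : Finset (Fin k), sgn (decide (i ∈ S)) * sgn (decide (j ∈ S))
        = (if i ∈ S then (1:ℝ) else -1) * (if j ∈ S then (1:ℝ) else -1) := by
      intro S
      unfold sgn
      by_cases h1 : i ∈ S <;> by_cases h2 : j ∈ S <;> simp [h1, h2]
    rw [Finset.sum_congr rfl fun S _ => hpt S, pair_sum k t hk2 i j hij]
    unfold sgn
    simp only [if_pos rfl]
    field_simp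
    ring_nf
    norm_num
end

section
/- Let k ≥ 2 be even. Define μ on {-1,1}^k by: μ(x) = 1/(k+2) if x = (1,...,1); μ(x) = (1/2)·(1/C(k,k/2)) if Σ_{i=1}^k x_i = 0; μ(x) = (k/(2k+4))·(1/C(k,1+k/2)) if Σ_{i=1}^k x_i = -2; and μ(x) = 0 otherwise, where C(n,m) denotes the binomial coefficient. Then μ is a probability distribution (its total mass is 1), every coordinate has expectation 0 under μ, and for every pair of distinct coordinates i ≠ j the expectation of x_i · x_j under μ is 0. -/
/-- The distribution from Fact 2.9 (even case): mass `1/(k+2)` on the all-ones vector,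
mass `(1/2) / C(k,k/2)` on each vector whose coordinates sum to `0`, mass
`(k/(2k+4)) / C(k,1+k/2)` on each vector whose coordinates sum to `-2`, and `0` elsewhere. -/
noncomputable def muEven (k : ℕ) (x : Fin k → Bool) : ℝ :=
  if x = (fun _ => true) then 1 / (k + 2)
  else if (∑ i : Fin k, sgn (x i)) = 0 then
    (1 / 2) * (1 / (k.choose (k / 2)))
  else if (∑ i : Fin k, sgn (x i)) = -2 then
    ((k : ℝ) / (2 * k + 4)) * (1 / (k.choose (1 + k / 2)))
  else 0

lemma sgn_eq (b : Bool) : sgn b = 2 * (if b = true then (1:ℝ) else 0) - 1 := by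
  cases b <;> norm_num [sgn]

lemma sum_sgn {k : ℕ} (x : Fin k → Bool) :
    ∑ i, sgn (x i) = 2 * ((Finset.univ.filter (fun i => x i = true)).card : ℝ) - k := by
  simp only [sgn_eq]
  rw [Finset.sum_sub_distrib, ← Finset.mul_sum, Finset.sum_boole, Finset.sum_const,
    Finset.card_univ, Fintype.card_fin]
  simp

lemma card_cnt (k m : ℕ) :
    (Finset.univ.filter (fun x : Fin k → Bool =>
      (Finset.univ.filter (fun i => x i = true)).card = m)).card = k.choose m := by
  have h : k.choose m = (Finset.powersetCard m (Finset.univ : Finset (Fin k))).card := by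
    rw [Finset.card_powersetCard, Finset.card_univ, Fintype.card_fin]
  rw [h]
  apply Finset.card_bij (fun x _ => Finset.univ.filter (fun i => x i = true))
  · intro x hx
    rw [Finset.mem_powersetCard_univ]
    exact (Finset.mem_filter.mp hx).2
  · intro x hx y hy hxy
    funext i
    have h2 := Finset.ext_iff.mp hxy i
    simp only [Finset.mem_filter, Finset.mem_univ, true_and] at h2
    cases hxi : x i <;> cases hyi : y i <;> simp_all
  · intro s hs
    refine ⟨fun i => decide (i ∈ s), Finset.mem_filter.mpr ⟨Finset.mem_univ _, ?_⟩, ?_⟩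
    · have h3 : Finset.univ.filter (fun i => decide (i ∈ s) = true) = s := by ext i; simp
      rw [h3]
      exact Finset.mem_powersetCard_univ.mp hs
    · ext i; simp

lemma comp_bij {k : ℕ} (σ : Equiv.Perm (Fin k)) :
    Function.Bijective (fun x : Fin k → Bool => x ∘ σ) := by
  constructor
  · intro a b h
    funext m
    have := congrFun h (σ.symm m)
    simpa using this
  · intro y
    exact ⟨y ∘ σ.symm, by funext m; simp⟩

lemma muEven_comp {k : ℕ} (σ : Equiv.Perm (Fin k)) (x : Fin k → Bool) :
    muEven k (x ∘ σ) = muEven k x := by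
  have hS : ∑ i, sgn ((x ∘ σ) i) = ∑ i, sgn (x i) := Equiv.sum_comp σ (fun i => sgn (x i))
  have hP : (x ∘ σ = fun _ => true) ↔ (x = fun _ => true) := by
    constructor <;> intro h <;> funext i
    · have := congrFun h (σ.symm i); simpa using this
    · simp [h, Function.comp]
  unfold muEven
  rw [hS, if_congr hP rfl rfl]

lemma key (k t : ℕ) (ht1 : 1 ≤ t) (hkt : k = 2 * t) (G : ℝ → ℝ) :
    ∑ x : Fin k → Bool, muEven k x * G (∑ i, sgn (x i)) =
      (1/((k:ℝ)+2)) * G k + (1/2) * G 0 + ((k:ℝ)/(2*(k:ℝ)+4)) * G (-2) := by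
  have hcast : (k:ℝ) = 2*t := by rw [hkt]; push_cast; ring
  have ht1R : (1:ℝ) ≤ (t:ℝ) := by exact_mod_cast ht1
  have hkR : (2:ℝ) ≤ (k:ℝ) := by rw [hcast]; linarith
  have hdiv : k/2 = t := by omega
  have htk : t ≤ k := by omega
  have htk1 : 1 + k/2 ≤ k := by omega
  have hQ : ∀ x : Fin k → Bool, ((∑ i, sgn (x i)) = 0) ↔
      (Finset.univ.filter (fun i => x i = true)).card = t := by
    intro x
    rw [sum_sgn, hcast]
    constructor
    · intro h
      have : ((Finset.univ.filter (fun i => x i = true)).card : ℝ) = (t:ℝ) := by linarith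
      exact_mod_cast this
    · intro h; rw [h]; ring
  have hR : ∀ x : Fin k → Bool, ((∑ i, sgn (x i)) = -2) ↔
      (Finset.univ.filter (fun i => x i = true)).card = t - 1 := by
    intro x
    rw [sum_sgn, hcast]
    constructor
    · intro h
      have h2 : ((Finset.univ.filter (fun i => x i = true)).card : ℝ) + 1 = (t:ℝ) := by linarith
      have h3 : (Finset.univ.filter (fun i => x i = true)).card + 1 = t := by exact_mod_cast h2
      omega
    · intro h
      have h2 : (Finset.univ.filter (fun i => x i = true)).card + 1 = t := by omega
      have h3 : ((Finset.univ.filter (fun i => x i = true)).card : ℝ) + 1 = (t:ℝ) := by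
        exact_mod_cast h2
      linarith
  have point : ∀ x : Fin k → Bool, muEven k x * G (∑ i, sgn (x i)) =
      (if x = (fun _ => true) then (1/((k:ℝ)+2)) * G k else 0)
      + (if (∑ i, sgn (x i)) = 0 then ((1/2) * (1/(k.choose (k/2) : ℝ))) * G 0 else 0)
      + (if (∑ i, sgn (x i)) = -2 then
          (((k:ℝ)/(2*(k:ℝ)+4)) * (1/(k.choose (1 + k/2) : ℝ))) * G (-2) else 0) := by
    intro x
    by_cases hP : x = (fun _ => true)
    · have hS : (∑ i, sgn (x i)) = k := by
        rw [hP]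
        simp [sgn, Finset.card_univ]
      have h0 : (∑ i, sgn (x i)) ≠ 0 := by rw [hS]; intro h; linarith
      have h2 : (∑ i, sgn (x i)) ≠ -2 := by rw [hS]; intro h; linarith
      rw [muEven, if_pos hP, if_pos hP, if_neg h0, if_neg h2, hS]
      ring
    · rw [muEven, if_neg hP, if_neg hP]
      by_cases hQ' : (∑ i, sgn (x i)) = 0
      · have h2 : (∑ i, sgn (x i)) ≠ -2 := by rw [hQ']; norm_num
        rw [if_pos hQ', if_pos hQ', if_neg h2, hQ']
        ring
      · rw [if_neg hQ', if_neg hQ']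
        by_cases hR' : (∑ i, sgn (x i)) = -2
        · rw [if_pos hR', if_pos hR', hR']
          ring
        · rw [if_neg hR', if_neg hR']
          ring
  rw [Finset.sum_congr rfl (fun x _ => point x), Finset.sum_add_distrib, Finset.sum_add_distrib]
  have e1 : (∑ x : Fin k → Bool,
      if x = (fun _ => true) then (1/((k:ℝ)+2)) * G k else 0) = (1/((k:ℝ)+2)) * G k := by
    rw [Finset.sum_ite_eq' Finset.univ (fun _ => true) (fun _ => (1/((k:ℝ)+2)) * G k)]
    simp
  have e2 : (∑ x : Fin k → Bool,
      if (∑ i, sgn (x i)) = 0 then ((1/2) * (1/(k.choose (k/2) : ℝ))) * G 0 else 0)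
      = (1/2) * G 0 := by
    rw [Finset.sum_ite, Finset.sum_const_zero, add_zero, Finset.sum_const, nsmul_eq_mul]
    have hcard : (Finset.univ.filter (fun x : Fin k → Bool => (∑ i, sgn (x i)) = 0)).card
        = k.choose t := by
      rw [Finset.filter_congr (fun x _ => hQ x)]
      exact card_cnt k t
    have hchoose : k.choose (k/2) = k.choose t := by rw [hdiv]
    rw [hcard, hchoose]
    have hpos : (0:ℝ) < (k.choose t : ℝ) := by
      exact_mod_cast Nat.choose_pos htk
    field_simp
  have e3 : (∑ x : Fin k → Bool,
      if (∑ i, sgn (x i)) = -2 then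
        (((k:ℝ)/(2*(k:ℝ)+4)) * (1/(k.choose (1 + k/2) : ℝ))) * G (-2) else 0)
      = ((k:ℝ)/(2*(k:ℝ)+4)) * G (-2) := by
    rw [Finset.sum_ite, Finset.sum_const_zero, add_zero, Finset.sum_const, nsmul_eq_mul]
    have hcard : (Finset.univ.filter (fun x : Fin k → Bool => (∑ i, sgn (x i)) = -2)).card
        = k.choose (t-1) := by
      rw [Finset.filter_congr (fun x _ => hR x)]
      exact card_cnt k (t-1)
    have hsymm : k.choose (t-1) = k.choose (1 + k/2) := by
      rw [← Nat.choose_symm htk1]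
      congr 1
      clear * - hdiv hkt ht1
      omega
    rw [hcard, hsymm]
    have hpos : (0:ℝ) < (k.choose (1 + k/2) : ℝ) := by
      exact_mod_cast Nat.choose_pos htk1
    field_simp
  rw [e1, e2, e3]


/-- For even `k ≥ 2`, `muEven k` is a probability distribution on `{-1,1}^k`
with mean-zero coordinates and pairwise-uncorrelated coordinates. -/
theorem stmt2 (k : ℕ) (hk : 2 ≤ k) (heven : Even k) :
    (∀ x, 0 ≤ muEven k x) ∧
    (∑ x : Fin k → Bool, muEven k x) = 1 ∧
    (∀ i : Fin k, (∑ x : Fin k → Bool, muEven k x * sgn (x i)) = 0) ∧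
    (∀ i j : Fin k, i ≠ j →
      (∑ x : Fin k → Bool, muEven k x * (sgn (x i) * sgn (x j))) = 0) := by
  obtain ⟨t, ht⟩ := heven
  have hkt : k = 2 * t := by omega
  have ht1 : 1 ≤ t := by omega
  have hkR : (2:ℝ) ≤ (k:ℝ) := by exact_mod_cast hk
  have hk2 : (0:ℝ) < (k:ℝ) + 2 := by linarith
  have hkne : (k:ℝ) ≠ 0 := by positivity
  -- nonnegativity
  have hnn : ∀ x, 0 ≤ muEven k x := by
    intro x
    unfold muEven
    split_ifs <;> positivity
  -- total mass
  have htot : (∑ x : Fin k → Bool, muEven k x) = 1 := by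
    have h := key k t ht1 hkt (fun _ => 1)
    simp only [mul_one] at h
    rw [h]
    field_simp
    ring
  -- E[S]
  have hES : (∑ x : Fin k → Bool, muEven k x * (∑ i, sgn (x i))) = 0 := by
    have h := key k t ht1 hkt id
    simp only [id] at h
    rw [h]
    field_simp
    ring
  -- E[S^2]
  have hES2 : (∑ x : Fin k → Bool, muEven k x * (∑ i, sgn (x i))^2) = k := by
    have h := key k t ht1 hkt (fun s => s^2)
    rw [h]
    field_simp
    ring
  -- mean symmetry
  have hmeq : ∀ i i' : Fin k,
      (∑ x : Fin k → Bool, muEven k x * sgn (x i)) =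
      (∑ x : Fin k → Bool, muEven k x * sgn (x i')) := by
    intro i i'
    refine Fintype.sum_bijective (fun x : Fin k → Bool => x ∘ (Equiv.swap i' i))
      (comp_bij _) _ _ (fun x => ?_)
    simp [muEven_comp]
  -- means
  have hmean : ∀ i : Fin k, (∑ x : Fin k → Bool, muEven k x * sgn (x i)) = 0 := by
    intro i
    have hsum : ∑ j : Fin k, (∑ x : Fin k → Bool, muEven k x * sgn (x j)) = 0 := by
      rw [Finset.sum_comm]
      simp_rw [← Finset.mul_sum]
      exact hES
    rw [Finset.sum_congr rfl (fun j _ => hmeq j i), Finset.sum_const, Finset.card_univ,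
      Fintype.card_fin, nsmul_eq_mul] at hsum
    rcases mul_eq_zero.mp hsum with h | h
    · exact absurd h hkne
    · exact h
  refine ⟨hnn, htot, hmean, ?_⟩
  -- pair symmetry
  have hpeq : ∀ i j i' j' : Fin k, i ≠ j → i' ≠ j' →
      (∑ x : Fin k → Bool, muEven k x * (sgn (x i) * sgn (x j))) =
      (∑ x : Fin k → Bool, muEven k x * (sgn (x i') * sgn (x j'))) := by
    intro i j i' j' hij hij'
    set τ : Equiv.Perm (Fin k) := Equiv.swap i' i with hτ
    set σ : Equiv.Perm (Fin k) := τ.trans (Equiv.swap (τ j') j) with hσ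
    have hσi : σ i' = i := by
      have h1 : τ i' = i := Equiv.swap_apply_left i' i
      have h2 : τ j' ≠ i := by
        intro h
        exact hij' (τ.injective (h.trans h1.symm)).symm
      simp only [hσ, Equiv.trans_apply, h1]
      exact Equiv.swap_apply_of_ne_of_ne (Ne.symm h2) hij
    have hσj : σ j' = j := by
      simp only [hσ, Equiv.trans_apply]
      exact Equiv.swap_apply_left _ _
    refine Fintype.sum_bijective (fun x : Fin k → Bool => x ∘ σ) (comp_bij _) _ _ (fun x => ?_)
    simp only [muEven_comp, Function.comp_apply]
    rw [hσi, hσj]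
  -- diagonal
  have hdiag : ∀ i : Fin k,
      (∑ x : Fin k → Bool, muEven k x * (sgn (x i) * sgn (x i))) = 1 := by
    intro i
    have : ∀ x : Fin k → Bool, muEven k x * (sgn (x i) * sgn (x i)) = muEven k x := by
      intro x
      have : sgn (x i) * sgn (x i) = 1 := by cases x i <;> norm_num [sgn]
      rw [this, mul_one]
    rw [Finset.sum_congr rfl (fun x _ => this x)]
    exact htot
  intro i j hij
  -- double sum
  have hdouble : ∑ a : Fin k, ∑ b : Fin k,
      (∑ x : Fin k → Bool, muEven k x * (sgn (x a) * sgn (x b))) = k := by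
    have step1 : ∀ a : Fin k, (∑ b : Fin k, ∑ x : Fin k → Bool,
        muEven k x * (sgn (x a) * sgn (x b)))
        = ∑ x : Fin k → Bool, ∑ b : Fin k, muEven k x * (sgn (x a) * sgn (x b)) :=
      fun a => Finset.sum_comm
    rw [Finset.sum_congr rfl (fun a _ => step1 a), Finset.sum_comm]
    have hx : ∀ x : Fin k → Bool, ∑ a : Fin k, ∑ b : Fin k,
        muEven k x * (sgn (x a) * sgn (x b)) = muEven k x * (∑ i, sgn (x i))^2 := by
      intro x
      rw [sq, Finset.sum_mul_sum]
      simp_rw [Finset.mul_sum]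
    rw [Finset.sum_congr rfl (fun x _ => hx x)]
    exact hES2
  set c := (∑ x : Fin k → Bool, muEven k x * (sgn (x i) * sgn (x j))) with hc
  have hsplit : ∀ a : Fin k, ∑ b : Fin k,
      (∑ x : Fin k → Bool, muEven k x * (sgn (x a) * sgn (x b)))
      = 1 + ((k:ℝ) - 1) * c := by
    intro a
    rw [← Finset.add_sum_erase _ _ (Finset.mem_univ a), hdiag a]
    congr 1
    have : ∀ b ∈ Finset.univ.erase a,
        (∑ x : Fin k → Bool, muEven k x * (sgn (x a) * sgn (x b))) = c := by
      intro b hb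
      exact hpeq a b i j (Ne.symm (Finset.ne_of_mem_erase hb)) hij
    rw [Finset.sum_congr rfl this, Finset.sum_const, Finset.card_erase_of_mem (Finset.mem_univ a),
      Finset.card_univ, Fintype.card_fin, nsmul_eq_mul]
    congr 1
    rw [Nat.cast_sub (by omega : 1 ≤ k)]
    norm_num
  rw [Finset.sum_congr rfl (fun a _ => hsplit a), Finset.sum_const, Finset.card_univ,
    Fintype.card_fin, nsmul_eq_mul] at hdouble
  have hkm1 : (k:ℝ) - 1 ≠ 0 := by intro h; nlinarith
  have : ((k:ℝ) - 1) * c = 0 := by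
    have h2 : (k:ℝ) * (1 + ((k:ℝ)-1)*c) = (k:ℝ) * 1 := by rw [hdouble, mul_one]
    have h3 : 1 + ((k:ℝ)-1)*c = 1 := mul_left_cancel₀ hkne h2
    linarith
  rcases mul_eq_zero.mp this with h | h
  · exact absurd h hkm1
  · exact h
end

section
/- For every real a with 0 < a ≤ 1/4, one has (1 - (π + arccos(4a-1))/(2π))/a ≥ 1, with equality when a = 1/4. -/
open Real

/-- For `0 < a ≤ 1/4`, `(1 - (π + arccos(4a-1))/(2π))/a ≥ 1`,
with equality at `a = 1/4`. -/
theorem stmt5 :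
    (∀ a : ℝ, 0 < a → a ≤ 1/4 →
      (1 - (Real.pi + Real.arccos (4 * a - 1)) / (2 * Real.pi)) / a ≥ 1) ∧
    (1 - (Real.pi + Real.arccos (4 * (1/4 : ℝ) - 1)) / (2 * Real.pi)) / (1/4 : ℝ) = 1 := by
  have hpi := Real.pi_pos
  constructor
  · intro a ha ha'
    -- key: cos (2πa) ≥ 1 - 4a
    have hx0 : (0:ℝ) ≤ 2 * π * a := by positivity
    have hx2 : 2 * π * a ≤ π / 2 := by nlinarith
    have hcos : 1 - 4 * a ≤ Real.cos (2 * π * a) := by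
      have := Real.one_sub_mul_le_cos hx0 hx2
      have h : 2 / π * (2 * π * a) = 4 * a := by field_simp; ring
      linarith [h ▸ this]
    -- arccos (4a-1) ≤ π - 2πa
    have hkey : Real.arccos (4 * a - 1) ≤ π - 2 * π * a := by
      have h1 : π - 2 * π * a = Real.arccos (Real.cos (π - 2 * π * a)) := by
        rw [Real.arccos_cos (by linarith) (by linarith)]
      have h2 : Real.cos (π - 2 * π * a) ≤ 4 * a - 1 := by
        rw [Real.cos_pi_sub]; linarith
      rw [h1, Real.arccos_eq_pi_div_two_sub_arcsin, Real.arccos_eq_pi_div_two_sub_arcsin]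
      have := Real.monotone_arcsin h2
      linarith
    have hnn := Real.arccos_nonneg (4 * a - 1)
    have hfrac : (π + Real.arccos (4 * a - 1)) / (2 * π) ≤ 1 - a := by
      rw [div_le_iff₀ (by positivity)]; nlinarith
    rw [ge_iff_le, le_div_iff₀ ha]
    linarith
  · norm_num [Real.arccos_zero]
    field_simp
    ring
end

section
/- For every real a with 0 < a ≤ 1/4, one has (1 - (3·arccos((4a-1)/3))/(2π))/a ≥ 1. -/
open Real

lemma arcsin_le (t : ℝ) (ht0 : 0 ≤ t) (ht1 : t ≤ 1) : Real.arcsin t ≤ Real.pi * t / 2 := by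
  have hθ0 : 0 ≤ Real.arcsin t := Real.arcsin_nonneg.2 ht0
  have hθ1 : Real.arcsin t ≤ Real.pi / 2 := Real.arcsin_le_pi_div_two t
  have h := Real.mul_le_sin hθ0 hθ1
  rw [Real.sin_arcsin (by linarith) ht1] at h
  have hπ := Real.pi_pos
  rw [div_mul_eq_mul_div, div_le_iff₀ hπ] at h
  nlinarith

/-- For `0 < a ≤ 1/4`, `(1 - 3·arccos((4a-1)/3)/(2π))/a ≥ 1`. -/
theorem stmt6 (a : ℝ) (ha0 : 0 < a) (ha1 : a ≤ 1/4) :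
    (1 - (3 * Real.arccos ((4 * a - 1) / 3)) / (2 * Real.pi)) / a ≥ 1 := by
  set x : ℝ := (4 * a - 1) / 3 with hx
  have hx0 : x ≤ 0 := by rw [hx]; linarith
  have hx1 : -1 ≤ x := by rw [hx]; linarith
  have hkey : Real.arccos x ≤ Real.pi * (1 - x) / 2 := by
    rw [Real.arccos]
    have : Real.arcsin (-x) ≤ Real.pi * (-x) / 2 :=
      arcsin_le (-x) (by linarith) (by linarith)
    rw [Real.arcsin_neg] at this
    linarith
  have hπ := Real.pi_pos
  rw [ge_iff_le, le_div_iff₀ ha0]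
  have h2 : (3 * Real.arccos x) / (2 * Real.pi) ≤ 1 - a := by
    rw [div_le_iff₀ (by linarith)]
    have : x = (4 * a - 1) / 3 := hx
    nlinarith
  linarith
end

section
/- Let x be a real number with -1 ≤ x ≤ 1. If x ≥ 0, then π + arccos(x) ≤ 3·arccos(x/3). If x ≤ 0, then π + arccos(x) ≥ 3·arccos(x/3). -/
open Real

private lemma cos_mono_aux {u v : ℝ} (hu1 : Real.pi ≤ u) (hu2 : u ≤ 2 * Real.pi)
    (hv1 : Real.pi ≤ v) (hv2 : v ≤ 2 * Real.pi)
    (h : Real.cos u ≤ Real.cos v) : u ≤ v := by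
  by_contra hlt
  push_neg at hlt
  have key : Real.cos (2 * Real.pi - u) > Real.cos (2 * Real.pi - v) := by
    apply Real.strictAntiOn_cos
    · constructor <;> [linarith; linarith [Real.pi_pos]]
    · constructor <;> [linarith; linarith [Real.pi_pos]]
    · linarith
  have e : ∀ w : ℝ, Real.cos (2 * Real.pi - w) = Real.cos w := by
    intro w
    rw [Real.cos_sub, Real.cos_two_pi, Real.sin_two_pi]
    ring
  rw [e u, e v] at key
  linarith

private lemma arccos_anti {a b : ℝ} (ha : -1 ≤ a) (hb : b ≤ 1) (hab : a ≤ b) :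
    Real.arccos b ≤ Real.arccos a := by
  rcases hab.lt_or_eq with h | h
  · exact (Real.strictAntiOn_arccos ⟨ha, hab.trans hb⟩ ⟨ha.trans hab, hb⟩ h).le
  · rw [h]

private lemma arccos_half : Real.arccos (1/2) = Real.pi / 3 := by
  rw [← Real.cos_pi_div_three,
    Real.arccos_cos (by positivity) (by linarith [Real.pi_pos])]

private lemma arccos_neg_half : Real.arccos (-(1/2)) = 2 * Real.pi / 3 := by
  rw [show (-(1/2) : ℝ) = Real.cos (2 * Real.pi / 3) by
        rw [show (2 * Real.pi / 3 : ℝ) = Real.pi - Real.pi / 3 by ring,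
          Real.cos_pi_sub, Real.cos_pi_div_three],
      Real.arccos_cos (by positivity) (by linarith [Real.pi_pos])]

/-- For `-1 ≤ x ≤ 1`: if `x ≥ 0` then `π + arccos x ≤ 3·arccos(x/3)`;
if `x ≤ 0` then `π + arccos x ≥ 3·arccos(x/3)`. -/
theorem stmt11 (x : ℝ) (h0 : -1 ≤ x) (h1 : x ≤ 1) :
    (x ≥ 0 → Real.pi + Real.arccos x ≤ 3 * Real.arccos (x / 3)) ∧
    (x ≤ 0 → Real.pi + Real.arccos x ≥ 3 * Real.arccos (x / 3)) := by
  have h3a : (-1 : ℝ) ≤ x / 3 := by linarith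
  have h3b : x / 3 ≤ 1 := by linarith
  have hcos3 : Real.cos (3 * Real.arccos (x / 3)) = 4 * (x/3)^3 - x := by
    rw [Real.cos_three_mul, Real.cos_arccos h3a h3b]; ring
  have hcospa : Real.cos (Real.pi + Real.arccos x) = -x := by
    rw [add_comm, Real.cos_add_pi, Real.cos_arccos h0 h1]
  have ha1 := Real.arccos_nonneg x
  have ha2 := Real.arccos_le_pi x
  have hpi := Real.pi_pos
  constructor
  · intro hx
    -- bounds
    have hax : Real.arccos x ≤ Real.pi / 2 := by
      rw [← Real.arccos_zero]; exact arccos_anti (by norm_num) h1 hx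
    have hb2 : Real.arccos (x/3) ≤ Real.pi / 2 := by
      rw [← Real.arccos_zero]; exact arccos_anti (by norm_num) h3b (by linarith)
    have hb1 : Real.pi / 3 ≤ Real.arccos (x/3) := by
      rw [← arccos_half]; exact arccos_anti h3a (by norm_num) (by linarith)
    apply cos_mono_aux (by linarith) (by linarith) (by linarith) (by linarith)
    rw [hcos3, hcospa]
    nlinarith [pow_nonneg hx 3]
  · intro hx
    have hax : Real.pi / 2 ≤ Real.arccos x := by
      rw [← Real.arccos_zero]; exact arccos_anti h0 (by norm_num) hx
    have hb2 : Real.pi / 2 ≤ Real.arccos (x/3) := by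
      rw [← Real.arccos_zero]; exact arccos_anti h3a (by norm_num) (by linarith)
    have hb1 : Real.arccos (x/3) ≤ 2 * Real.pi / 3 := by
      rw [← arccos_neg_half]; exact arccos_anti (by norm_num) h3b (by linarith)
    apply cos_mono_aux (by linarith) (by linarith) (by linarith) (by linarith)
    rw [hcos3, hcospa]
    nlinarith [Odd.pow_nonpos (⟨1, by norm_num⟩ : Odd 3) hx]
end

section
/- The function f : (0, 1/4] → ℝ defined by f(x) = (1 - (π + arccos(4x-1))/(2π))/x is decreasing on the interval (0, 1/4]; that is, for all x, y ∈ (0, 1/4] with x ≤ y, one has f(y) ≤ f(x). -/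
open Real

lemma key_chord {a b : ℝ} (ha : 0 ≤ a) (hab : a ≤ b) (hb : b ≤ π/2) :
    (1 - Real.cos a) * b ≤ (1 - Real.cos b) * a := by
  rcases eq_or_lt_of_le (ha.trans hab) with hb0 | hb0
  · simp [← hb0, le_antisymm hab (hb0 ▸ ha)]
  have hcv : ConvexOn ℝ (Set.Icc (-(π/2)) (π/2)) (fun t => -Real.cos t) :=
    strictConcaveOn_cos_Icc.concaveOn.neg
  have h0 : (0:ℝ) ∈ Set.Icc (-(π/2)) (π/2) := by
    constructor <;> nlinarith [Real.pi_pos]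
  have hbmem : b ∈ Set.Icc (-(π/2)) (π/2) := by
    constructor <;> nlinarith [Real.pi_pos]
  have hs1 : 0 ≤ 1 - a/b := by
    have := div_le_one_of_le₀ hab hb0.le
    linarith
  have hs2 : 0 ≤ a/b := div_nonneg ha hb0.le
  have hsum : (1 - a/b) + a/b = 1 := by ring
  have := hcv.2 h0 hbmem hs1 hs2 hsum
  simp only [smul_eq_mul, mul_zero, zero_add, Real.cos_zero, mul_one] at this
  have hab' : (a/b) * b = a := div_mul_cancel₀ a hb0.ne'
  rw [hab'] at this
  have h2 : 1 - Real.cos a ≤ (a/b) * (1 - Real.cos b) := by nlinarith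
  calc (1 - Real.cos a) * b ≤ ((a/b) * (1 - Real.cos b)) * b := by
        have hcb : Real.cos b ≤ 1 := Real.cos_le_one b
        nlinarith
    _ = (1 - Real.cos b) * a := by field_simp

/-- `f(x) = (1 - (π + arccos(4x-1))/(2π))/x` is decreasing on `(0, 1/4]`. -/
theorem stmt12 (x y : ℝ) (hx0 : 0 < x) (hx : x ≤ 1/4) (hy0 : 0 < y) (hy : y ≤ 1/4)
    (hxy : x ≤ y) :
    (1 - (Real.pi + Real.arccos (4 * y - 1)) / (2 * Real.pi)) / y ≤
      (1 - (Real.pi + Real.arccos (4 * x - 1)) / (2 * Real.pi)) / x := by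
  have hpi := Real.pi_pos
  set A := Real.arccos (1 - 4*x) with hA
  set B := Real.arccos (1 - 4*y) with hB
  have hA0 : 0 ≤ A := Real.arccos_nonneg _
  have hAB : A ≤ B := by
    rw [hA, hB, Real.arccos, Real.arccos]
    have := Real.monotone_arcsin (by linarith : 1 - 4*y ≤ 1 - 4*x)
    linarith
  have hB2 : B ≤ π/2 := Real.arccos_le_pi_div_two.2 (by linarith)
  have hcosA : Real.cos A = 1 - 4*x := Real.cos_arccos (by linarith) (by linarith)
  have hcosB : Real.cos B = 1 - 4*y := Real.cos_arccos (by linarith) (by linarith)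
  have hkey := key_chord hA0 hAB hB2
  rw [hcosA, hcosB] at hkey
  -- hkey : 4x * B ≤ 4y * A
  have hxB : x * B ≤ y * A := by nlinarith
  have hax : Real.arccos (4*x - 1) = π - A := by
    rw [hA, ← Real.arccos_neg]; ring_nf
  have hay : Real.arccos (4*y - 1) = π - B := by
    rw [hB, ← Real.arccos_neg]; ring_nf
  rw [hax, hay]
  have e1 : (1 - (π + (π - A)) / (2*π)) = A / (2*π) := by field_simp; ring
  have e2 : (1 - (π + (π - B)) / (2*π)) = B / (2*π) := by field_simp; ring
  rw [e1, e2]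
  rw [div_div, div_div, div_le_div_iff₀ (by positivity) (by positivity)]
  nlinarith
end
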